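/- Let F̂(z) = Mz + G(z) be a C¹ lift of a torus map with G of class C¹, satisfying the expanding-block assumption with k = 1 (P∘M = m·P for an integer m with |m| > 1) and admitting an invariant expanding cone structure with constants α > 0 and K > 1 centered on the first coordinate direction. Let Φ̂(z) = lim_{n→∞} m^{−n} P(F̂^n(z)). Then for every x₀ ∈ ℝ and every y ∈ ℝ^{d−1} there is a unique point z ∈ ℝ^d with Qz = y and Φ̂(z) = x₀; consequently the fiber Φ̂^{−1}(x₀) is the graph of a continuous function h: ℝ^{d−1} → ℝ (i.e. Φ̂^{−1}(x₀) = {(h(y), y) : y ∈ ℝ^{d−1}}, up to the coordinate ordering). -/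

import Mathlib

open Filter Topology

noncomputable section

/-- Reinterpret a vector `Fin d → ℝ` as a point of Euclidean space `ℝ^d`. -/
def toEuc (d : ℕ) (v : Fin d → ℝ) : EuclideanSpace ℝ (Fin d) := WithLp.toLp 2 v

/-- Projection onto the last `d - k` coordinates of `ℝ^d`. -/
def projQ (d k : ℕ) (h : k ≤ d) (z : EuclideanSpace ℝ (Fin d)) :
    EuclideanSpace ℝ (Fin (d - k)) :=
  WithLp.toLp 2 fun j : Fin (d - k) => z ⟨k + j.val, by have := j.isLt; omega⟩

theorem coord_le_norm {d : ℕ} (z : EuclideanSpace ℝ (Fin d)) (i : Fin d) : |z i| ≤ ‖z‖ := by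
  rw [EuclideanSpace.norm_eq]
  simp only [Real.norm_eq_abs, sq_abs]
  rw [← Real.sqrt_sq_eq_abs]
  apply Real.sqrt_le_sqrt
  exact Finset.single_le_sum (f := fun j => z j ^ 2) (fun j _ => sq_nonneg _) (Finset.mem_univ i)

theorem incr_lemma {g φ : ℝ → ℝ} (hφc : Continuous φ) (hg : ∀ t, HasDerivAt g (φ t) t)
    {c : ℝ} (hc : 0 ≤ c) (hφ : ∀ t, c ≤ |φ t|) : c ≤ |g 1 - g 0| := by
  rcases eq_or_lt_of_le hc with h0 | hc
  · exact h0 ▸ abs_nonneg _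
  have hne : ∀ t, φ t ≠ 0 := fun t h => by have := hφ t; rw [h, abs_zero] at this; linarith
  have hsign : (∀ t, c ≤ φ t) ∨ (∀ t, φ t ≤ -c) := by
    rcases lt_or_gt_of_ne (hne 0) with h0 | h0
    · right
      intro t
      by_contra hlt
      push_neg at hlt
      have ht : 0 < φ t := by
        rcases lt_or_gt_of_ne (hne t) with h | h
        · have := hφ t; rw [abs_of_neg h] at this; linarith
        · exact h
      have : (0 : ℝ) ∈ Set.uIcc (φ 0) (φ t) := Set.mem_uIcc.2 (Or.inl ⟨le_of_lt h0, le_of_lt ht⟩)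
      obtain ⟨s, _, hs⟩ := intermediate_value_uIcc (hφc.continuousOn) this
      exact hne s hs
    · left
      intro t
      by_contra hlt
      push_neg at hlt
      have ht : φ t < 0 := by
        rcases lt_or_gt_of_ne (hne t) with h | h
        · exact h
        · have := hφ t; rw [abs_of_pos h] at this; linarith
      have : (0 : ℝ) ∈ Set.uIcc (φ 0) (φ t) := Set.mem_uIcc.2 (Or.inr ⟨le_of_lt ht, le_of_lt h0⟩)
      obtain ⟨s, _, hs⟩ := intermediate_value_uIcc (hφc.continuousOn) this
      exact hne s hs
  rcases hsign with hpos | hneg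
  · have hmono : Monotone (fun t => g t - c * t) := by
      have hd : ∀ t, HasDerivAt (fun t => g t - c * t) (φ t - c) t := fun t =>
        (hg t).sub (by simpa using (hasDerivAt_id t).const_mul c)
      refine monotone_of_deriv_nonneg (fun t => (hd t).differentiableAt) (fun t => ?_)
      rw [(hd t).deriv]; linarith [hpos t]
    have := hmono (by norm_num : (0:ℝ) ≤ 1)
    simp only [mul_zero, mul_one] at this
    calc c ≤ g 1 - g 0 := by linarith
    _ ≤ |g 1 - g 0| := le_abs_self _
  · have hmono : Monotone (fun t => -g t - c * t) := by
      have hd : ∀ t, HasDerivAt (fun t => -g t - c * t) (-φ t - c) t := fun t =>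
        (hg t).neg.sub (by simpa using (hasDerivAt_id t).const_mul c)
      refine monotone_of_deriv_nonneg (fun t => (hd t).differentiableAt) (fun t => ?_)
      rw [(hd t).deriv]; linarith [hneg t]
    have := hmono (by norm_num : (0:ℝ) ≤ 1)
    simp only [mul_zero, mul_one] at this
    calc c ≤ g 0 - g 1 := by linarith
    _ ≤ |g 0 - g 1| := le_abs_self _
    _ = |g 1 - g 0| := abs_sub_comm _ _


/--
Let `F̂(z) = Mz + G(z)` be a C¹ lift of a torus map with `G` of class
C¹, satisfying the expanding-block assumption with `k = 1` (so `P(z) = z₁`,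
`P∘M = m·P` for an integer `m` with `|m| > 1`), and admitting an invariant expanding cone
structure with constants `α > 0` and `K > 1` centered on the first coordinate direction.
Let `Φ̂(z) = lim_{n→∞} m^{−n} P(F̂ⁿ(z))`. Then for every `x₀ ∈ ℝ` and every
`y ∈ ℝ^{d−1}` there is a unique point `z ∈ ℝ^d` with `Qz = y` and `Φ̂(z) = x₀`;
consequently the fiber `Φ̂⁻¹(x₀)` is the graph of a continuous function
`h : ℝ^{d−1} → ℝ` (i.e. `Φ̂⁻¹(x₀) = {(h(y), y) : y ∈ ℝ^{d−1}}`, up to the coordinate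
ordering).
-/
theorem stmt14 (d : ℕ) (hd : 0 < d)
    (M : Matrix (Fin d) (Fin d) ℝ) (hMint : ∀ i j, ∃ n : ℤ, M i j = (n : ℝ))
    (G : EuclideanSpace ℝ (Fin d) → EuclideanSpace ℝ (Fin d))
    (hGC1 : ContDiff ℝ 1 G) (hGbdd : ∃ C, ∀ z, ‖G z‖ ≤ C)
    (hGper : ∀ (z : EuclideanSpace ℝ (Fin d)) (p : Fin d → ℤ),
      G (z + toEuc d fun i => (p i : ℝ)) = G z)
    (F : EuclideanSpace ℝ (Fin d) → EuclideanSpace ℝ (Fin d))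
    (hF : ∀ z, F z = toEuc d (M.mulVec z) + G z)
    (m : ℤ) (hm : 1 < |m|)
    (hPM : ∀ z : EuclideanSpace ℝ (Fin d),
      toEuc d (M.mulVec z) ⟨0, hd⟩ = (m : ℝ) * z ⟨0, hd⟩)
    (α K : ℝ) (hα : 0 < α) (hK : 1 < K)
    (hcone : ∀ (z v : EuclideanSpace ℝ (Fin d)),
      ‖projQ d 1 hd v‖ ≤ α * |v ⟨0, hd⟩| →
        ‖projQ d 1 hd (fderiv ℝ F z v)‖ ≤ α * |(fderiv ℝ F z v) ⟨0, hd⟩| ∧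
        K * |v ⟨0, hd⟩| ≤ |(fderiv ℝ F z v) ⟨0, hd⟩|)
    (Φ : EuclideanSpace ℝ (Fin d) → ℝ)
    (hΦ : ∀ z, Tendsto (fun n : ℕ => ((m : ℝ) ^ n)⁻¹ * (F^[n] z) ⟨0, hd⟩)
      atTop (𝓝 (Φ z)))
    :
    ∀ x₀ : ℝ,
      (∀ y : EuclideanSpace ℝ (Fin (d - 1)),
        ∃! z : EuclideanSpace ℝ (Fin d), projQ d 1 hd z = y ∧ Φ z = x₀) ∧
      ∃ h : EuclideanSpace ℝ (Fin (d - 1)) → ℝ, Continuous h ∧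
        ∀ z : EuclideanSpace ℝ (Fin d),
          Φ z = x₀ ↔ z ⟨0, hd⟩ = h (projQ d 1 hd z) := by
  -- setup
  set i0 : Fin d := ⟨0, hd⟩ with hi0
  obtain ⟨C, hC⟩ := hGbdd
  have hC0 : 0 ≤ C := le_trans (norm_nonneg _) (hC 0)
  set mR : ℝ := (m : ℝ) with hmR
  have hmR1 : 1 < |mR| := by
    rw [hmR, ← Int.cast_abs]
    exact_mod_cast hm
  have hmR0 : mR ≠ 0 := fun h => by rw [h, abs_zero] at hmR1; linarith
  set C' : ℝ := C / (|mR| - 1) with hC'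
  have hC'0 : 0 ≤ C' := div_nonneg hC0 (by linarith)
  set r : ℝ := |mR|⁻¹ with hr
  have hr0 : 0 < r := inv_pos.2 (by linarith)
  have hr1 : r < 1 := by
    rw [hr]; rw [inv_lt_one_iff₀]; right; linarith
  -- the linear part as a continuous linear map
  have hA : ∃ A : EuclideanSpace ℝ (Fin d) →L[ℝ] EuclideanSpace ℝ (Fin d),
      ∀ z, A z = toEuc d (M.mulVec z) := by
    refine ⟨((PiLp.continuousLinearEquiv 2 ℝ (fun _ : Fin d => ℝ)).symm.toContinuousLinearMap.comp
      (LinearMap.toContinuousLinearMap M.mulVecLin)).comp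
      (PiLp.continuousLinearEquiv 2 ℝ (fun _ : Fin d => ℝ)).toContinuousLinearMap,
      fun z => rfl⟩
  obtain ⟨A, hAdef⟩ := hA
  have hFeq : F = fun z => A z + G z := by
    funext z; rw [hF z, hAdef z]
  have hFC1 : ContDiff ℝ 1 F := by
    rw [hFeq]; exact (A.contDiff).add hGC1
  have hFcont : Continuous F := hFC1.continuous
  have hFnC1 : ∀ n : ℕ, ContDiff ℝ 1 (F^[n]) := by
    intro n
    induction n with
    | zero => simpa using contDiff_id
    | succ n ih => rw [Function.iterate_succ']; exact hFC1.comp ih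
  have hFndiff : ∀ n z, DifferentiableAt ℝ (F^[n]) z := fun n z =>
    (hFnC1 n).differentiable one_ne_zero z
  -- cone invariance for iterates
  have hconeIter : ∀ (n : ℕ) (z v : EuclideanSpace ℝ (Fin d)),
      ‖projQ d 1 hd v‖ ≤ α * |v i0| →
        ‖projQ d 1 hd (fderiv ℝ (F^[n]) z v)‖ ≤ α * |(fderiv ℝ (F^[n]) z v) i0| ∧
        K ^ n * |v i0| ≤ |(fderiv ℝ (F^[n]) z v) i0| := by
    intro n
    induction n with
    | zero =>
      intro z v hv
      have : fderiv ℝ (F^[0]) z = ContinuousLinearMap.id ℝ _ := by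
        simp [Function.iterate_zero, fderiv_id]
      rw [this]
      simpa using hv
    | succ n ih =>
      intro z v hv
      have hcomp : fderiv ℝ (F^[n+1]) z =
          (fderiv ℝ F (F^[n] z)).comp (fderiv ℝ (F^[n]) z) := by
        rw [Function.iterate_succ']
        exact fderiv_comp z (hFC1.differentiable one_ne_zero _) (hFndiff n z)
      obtain ⟨ih1, ih2⟩ := ih z v hv
      obtain ⟨h1, h2⟩ := hcone (F^[n] z) (fderiv ℝ (F^[n]) z v) ih1
      rw [hcomp]
      refine ⟨h1, ?_⟩
      simp only [ContinuousLinearMap.comp_apply]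
      calc K ^ (n+1) * |v i0| = K * (K ^ n * |v i0|) := by ring
      _ ≤ K * |(fderiv ℝ (F^[n]) z v) i0| :=
          mul_le_mul_of_nonneg_left ih2 (by linarith)
      _ ≤ _ := h2
  -- expansion estimate along horizontal segments
  have hexp : ∀ (n : ℕ) (z z' : EuclideanSpace ℝ (Fin d)), projQ d 1 hd z = projQ d 1 hd z' →
      K ^ n * |z i0 - z' i0| ≤ |(F^[n] z) i0 - (F^[n] z') i0| := by
    intro n z z' hq
    set v : EuclideanSpace ℝ (Fin d) := z' - z with hv
    have hvq : ‖projQ d 1 hd v‖ ≤ α * |v i0| := by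
      have hzero : projQ d 1 hd v = 0 := by
        ext j
        have hj := congrArg (fun w => w j) hq
        show z' ⟨1 + j.val, by have := j.isLt; omega⟩
          - z ⟨1 + j.val, by have := j.isLt; omega⟩ = 0
        rw [sub_eq_zero]
        exact hj.symm
      rw [hzero, norm_zero]
      positivity
    have hvi0 : v i0 = z' i0 - z i0 := rfl
    have hg : ∀ t : ℝ, HasDerivAt (fun t => (F^[n] (z + t • v)) i0)
        ((fderiv ℝ (F^[n]) (z + t • v) v) i0) t := by
      intro t
      have hline : HasDerivAt (fun t : ℝ => z + t • v) v t := by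
        have h0 : HasDerivAt (fun t : ℝ => t • v) ((1:ℝ) • v) t := (hasDerivAt_id t).smul_const v
        rw [one_smul] at h0
        exact h0.const_add z
      have h2 : HasDerivAt (fun t : ℝ => F^[n] (z + t • v))
          (fderiv ℝ (F^[n]) (z + t • v) v) t :=
        (hFndiff n _).hasFDerivAt.comp_hasDerivAt t hline
      have hproj : HasFDerivAt (fun w : EuclideanSpace ℝ (Fin d) => w i0)
          (EuclideanSpace.proj i0 : EuclideanSpace ℝ (Fin d) →L[ℝ] ℝ)
          (F^[n] (z + t • v)) :=
        ContinuousLinearMap.hasFDerivAt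
          (EuclideanSpace.proj i0 : EuclideanSpace ℝ (Fin d) →L[ℝ] ℝ)
      exact hproj.comp_hasDerivAt t h2
    have hφc : Continuous fun t : ℝ => (fderiv ℝ (F^[n]) (z + t • v) v) i0 := by
      have h1 : Continuous fun w => fderiv ℝ (F^[n]) w := (hFnC1 n).continuous_fderiv one_ne_zero
      have h2 : Continuous fun t : ℝ => z + t • v :=
        continuous_const.add (continuous_id.smul continuous_const)
      exact (EuclideanSpace.proj i0).continuous.comp ((h1.comp h2).clm_apply continuous_const)
    have hlow : ∀ t : ℝ, K ^ n * |v i0| ≤ |(fderiv ℝ (F^[n]) (z + t • v) v) i0| := fun t =>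
      (hconeIter n (z + t • v) v hvq).2
    have hc0 : 0 ≤ K ^ n * |v i0| := by positivity
    have := incr_lemma hφc hg hc0 hlow
    have h10 : z + (1 : ℝ) • v = z' := by rw [one_smul, hv]; abel
    have h00 : z + (0 : ℝ) • v = z := by rw [zero_smul, add_zero]
    rw [h10, h00] at this
    calc K ^ n * |z i0 - z' i0| = K ^ n * |v i0| := by rw [hvi0, abs_sub_comm]
      _ ≤ |(F^[n] z') i0 - (F^[n] z) i0| := this
      _ = |(F^[n] z) i0 - (F^[n] z') i0| := abs_sub_comm _ _
  -- P-recursion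
  have hPF : ∀ w, (F w) i0 = mR * w i0 + (G w) i0 := by
    intro w
    rw [hF w]
    have : (toEuc d (M.mulVec w) + G w) i0 = toEuc d (M.mulVec w) i0 + (G w) i0 := rfl
    rw [this, hPM w]
  -- master geometric bound
  have hstep : ∀ (w : EuclideanSpace ℝ (Fin d)) (n : ℕ),
      |(mR ^ n)⁻¹ * (F^[n] w) i0 - w i0| ≤ C' * (1 - r ^ n) := by
    intro w n
    induction n with
    | zero => simp
    | succ n ih =>
      have hsucc : (mR ^ (n+1))⁻¹ * (F^[n+1] w) i0
          = (mR ^ n)⁻¹ * (F^[n] w) i0 + (mR ^ (n+1))⁻¹ * (G (F^[n] w)) i0 := by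
        rw [Function.iterate_succ_apply', hPF, pow_succ]
        field_simp
      have hGb : |(G (F^[n] w)) i0| ≤ C := le_trans (coord_le_norm _ _) (hC _)
      have hrn1 : |(mR ^ (n+1))⁻¹| = r ^ (n+1) := by
        rw [abs_inv, abs_pow, ← inv_pow, hr]
      have h2 : |(mR ^ (n+1))⁻¹ * (G (F^[n] w)) i0| ≤ C * r ^ (n+1) := by
        rw [abs_mul, hrn1]
        calc r ^ (n+1) * |(G (F^[n] w)) i0| ≤ r ^ (n+1) * C :=
            mul_le_mul_of_nonneg_left hGb (by positivity)
          _ = C * r ^ (n+1) := mul_comm _ _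
      have htri : |(mR ^ (n+1))⁻¹ * (F^[n+1] w) i0 - w i0|
          ≤ |(mR ^ n)⁻¹ * (F^[n] w) i0 - w i0| + |(mR ^ (n+1))⁻¹ * (G (F^[n] w)) i0| := by
        rw [hsucc]
        have := abs_add_le ((mR ^ n)⁻¹ * (F^[n] w) i0 - w i0) ((mR ^ (n+1))⁻¹ * (G (F^[n] w)) i0)
        calc |(mR ^ n)⁻¹ * (F^[n] w) i0 + (mR ^ (n+1))⁻¹ * (G (F^[n] w)) i0 - w i0|
            = |((mR ^ n)⁻¹ * (F^[n] w) i0 - w i0) + (mR ^ (n+1))⁻¹ * (G (F^[n] w)) i0| := by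
              ring_nf
          _ ≤ _ := this
      have hCr : C' * (1 - r) = C * r := by
        have hne1 : |mR| - 1 ≠ 0 := ne_of_gt (by linarith)
        have hne2 : |mR| ≠ 0 := ne_of_gt (by linarith)
        rw [hC', hr]
        field_simp
      have hkey : C' * (1 - r ^ (n+1)) - (C' * (1 - r ^ n) + C * r ^ (n+1))
          = r ^ n * (C' * (1 - r) - C * r) := by
        rw [pow_succ]
        ring
      rw [hCr, sub_self, mul_zero] at hkey
      linarith
  have hΦP : ∀ w, |Φ w - w i0| ≤ C' := by
    intro w
    have h1 : Tendsto (fun n : ℕ => |(mR ^ n)⁻¹ * (F^[n] w) i0 - w i0|) atTop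
        (𝓝 |Φ w - w i0|) := ((hΦ w).sub_const (w i0)).abs
    refine le_of_tendsto h1 (Eventually.of_forall fun n => ?_)
    calc |(mR ^ n)⁻¹ * (F^[n] w) i0 - w i0| ≤ C' * (1 - r ^ n) := hstep w n
    _ ≤ C' := by nlinarith [pow_nonneg (le_of_lt hr0) n, hC'0]
  -- conjugacy
  have hΦF : ∀ z, Φ (F z) = mR * Φ z := by
    intro z
    have h1 : Tendsto (fun n : ℕ => (mR ^ n)⁻¹ * (F^[n] (F z)) i0) atTop (𝓝 (Φ (F z))) :=
      hΦ (F z)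
    have h3 : Tendsto (fun n : ℕ => (mR ^ (n+1))⁻¹ * (F^[n+1] z) i0) atTop (𝓝 (Φ z)) := by
      have := (hΦ z).comp (tendsto_add_atTop_nat 1)
      simpa [Function.comp_def] using this
    have h4 := h3.const_mul mR
    have heqn : (fun n : ℕ => mR * ((mR ^ (n+1))⁻¹ * (F^[n+1] z) i0))
        = fun n : ℕ => (mR ^ n)⁻¹ * (F^[n] (F z)) i0 := by
      funext n
      rw [← Function.iterate_succ_apply, pow_succ]
      field_simp
    rw [heqn] at h4
    exact tendsto_nhds_unique h1 h4
  have hΦFn : ∀ (n : ℕ) z, Φ (F^[n] z) = mR ^ n * Φ z := by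
    intro n
    induction n with
    | zero => simp
    | succ n ih =>
      intro z
      rw [Function.iterate_succ_apply', hΦF, ih]
      ring
  -- uniform approximation
  have hmaster : ∀ (z : EuclideanSpace ℝ (Fin d)) (n : ℕ),
      |Φ z - (mR ^ n)⁻¹ * (F^[n] z) i0| ≤ C' * r ^ n := by
    intro z n
    have h1 : |Φ (F^[n] z) - (F^[n] z) i0| ≤ C' := hΦP (F^[n] z)
    rw [hΦFn n z] at h1
    have hmn : |mR ^ n| ≠ 0 := by positivity
    have heq : |Φ z - (mR ^ n)⁻¹ * (F^[n] z) i0| = |mR ^ n|⁻¹ * |mR ^ n * Φ z - (F^[n] z) i0| := by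
      rw [← abs_inv, ← abs_mul, mul_sub, ← mul_assoc,
        inv_mul_cancel₀ (pow_ne_zero n hmR0), one_mul]
    have hrn : |mR ^ n|⁻¹ = r ^ n := by rw [abs_pow, ← inv_pow, hr]
    rw [heq, hrn]
    calc r ^ n * |mR ^ n * Φ z - (F^[n] z) i0| ≤ r ^ n * C' :=
        mul_le_mul_of_nonneg_left h1 (by positivity)
      _ = C' * r ^ n := mul_comm _ _
  -- continuity of Φ
  have hΦcont : Continuous Φ := by
    have hfn_cont : ∀ n : ℕ, Continuous fun z => (mR ^ n)⁻¹ * (F^[n] z) i0 := by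
      intro n
      exact continuous_const.mul
        ((EuclideanSpace.proj i0).continuous.comp (hFnC1 n).continuous)
    have hunif : TendstoUniformly (fun n z => (mR ^ n)⁻¹ * (F^[n] z) i0) Φ atTop := by
      rw [Metric.tendstoUniformly_iff]
      intro ε hε
      have hlim : Tendsto (fun n : ℕ => C' * r ^ n) atTop (𝓝 0) := by
        simpa using (tendsto_pow_atTop_nhds_zero_of_lt_one (le_of_lt hr0) hr1).const_mul C'
      filter_upwards [hlim.eventually (gt_mem_nhds hε)] with n hn z
      rw [Real.dist_eq]
      exact lt_of_le_of_lt (hmaster z n) hn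
    exact hunif.continuous (Eventually.of_forall hfn_cont).frequently
  -- quantitative injectivity
  have hinj : ∀ (n : ℕ) (z z' : EuclideanSpace ℝ (Fin d)), projQ d 1 hd z = projQ d 1 hd z' →
      r ^ n * (K ^ n * |z i0 - z' i0| - 2 * C') ≤ |Φ z - Φ z'| := by
    intro n z z' hq
    have h1 : |Φ z - Φ z'| = r ^ n * |Φ (F^[n] z) - Φ (F^[n] z')| := by
      have hone : r ^ n * |mR| ^ n = 1 := by
        rw [hr, ← mul_pow, inv_mul_cancel₀ (by linarith : |mR| ≠ 0), one_pow]
      rw [hΦFn n z, hΦFn n z', ← mul_sub, abs_mul, abs_pow, ← mul_assoc, hone, one_mul]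
    have h2 : K ^ n * |z i0 - z' i0| - 2 * C' ≤ |Φ (F^[n] z) - Φ (F^[n] z')| := by
      have ha := hΦP (F^[n] z)
      have hb := hΦP (F^[n] z')
      have hc := hexp n z z' hq
      have key : |(F^[n] z) i0 - (F^[n] z') i0| ≤ |Φ (F^[n] z) - Φ (F^[n] z')| + C' + C' := by
        have e : (F^[n] z) i0 - (F^[n] z') i0 =
            (Φ (F^[n] z) - Φ (F^[n] z')) + ((F^[n] z) i0 - Φ (F^[n] z))
              + (Φ (F^[n] z') - (F^[n] z') i0) := by ring
        rw [e]
        have t1 := abs_add_le ((Φ (F^[n] z) - Φ (F^[n] z')) + ((F^[n] z) i0 - Φ (F^[n] z)))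
          (Φ (F^[n] z') - (F^[n] z') i0)
        have t2 := abs_add_le (Φ (F^[n] z) - Φ (F^[n] z')) ((F^[n] z) i0 - Φ (F^[n] z))
        have t3 : |(F^[n] z) i0 - Φ (F^[n] z)| ≤ C' := by rw [abs_sub_comm]; exact ha
        linarith
      linarith
    rw [h1]
    exact mul_le_mul_of_nonneg_left h2 (by positivity)
  -- final assembly
  intro x₀
  set e : ℝ → EuclideanSpace ℝ (Fin (d-1)) → EuclideanSpace ℝ (Fin d) :=
    fun x y => WithLp.toLp 2 (fun i => if h : i.val = 0 then x
      else y ⟨i.val - 1, by have := i.isLt; omega⟩ : Fin d → ℝ) with he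
  have he0 : ∀ x y, (e x y) i0 = x := by
    intro x y
    show (if h : i0.val = 0 then x else y ⟨i0.val - 1, by have := i0.isLt; omega⟩) = x
    rw [dif_pos rfl]
  have heQ : ∀ x y, projQ d 1 hd (e x y) = y := by
    intro x y
    ext j
    show dite ((1 + j.val : ℕ) = 0) _ _ = y j
    rw [dif_neg (by omega)]
    refine congrArg y (Fin.ext ?_)
    show (1 + j.val) - 1 = j.val
    omega
  have herec : ∀ z : EuclideanSpace ℝ (Fin d), e (z i0) (projQ d 1 hd z) = z := by
    intro z
    ext i
    show dite _ _ _ = z i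
    by_cases h : i.val = 0
    · rw [dif_pos h]
      exact congrArg z (Fin.ext h.symm)
    · rw [dif_neg h]
      show z ⟨1 + (i.val - 1), _⟩ = z i
      refine congrArg z (Fin.ext ?_)
      show 1 + (i.val - 1) = i.val
      omega
  have hecont1 : ∀ x, Continuous fun y => e x y := by
    intro x
    have hc : Continuous fun (y : EuclideanSpace ℝ (Fin (d-1))) (i : Fin d) => (e x y) i := by
      refine continuous_pi fun i => ?_
      by_cases h : i.val = 0
      · simp only [he, WithLp.ofLp_toLp, dif_pos h]
        exact continuous_const
      · simp only [he, WithLp.ofLp_toLp, dif_neg h]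
        exact (EuclideanSpace.proj (⟨i.val - 1, by have := i.isLt; omega⟩ : Fin (d-1))
          : EuclideanSpace ℝ (Fin (d-1)) →L[ℝ] ℝ).continuous
    exact (PiLp.continuous_toLp (p := 2) (β := fun _ : Fin d => ℝ)).comp hc
  have hecont2 : ∀ y, Continuous fun x => e x y := by
    intro y
    have hc : Continuous fun (x : ℝ) (i : Fin d) => (e x y) i := by
      refine continuous_pi fun i => ?_
      by_cases h : i.val = 0
      · simp only [he, WithLp.ofLp_toLp, dif_pos h]
        exact continuous_id
      · simp only [he, WithLp.ofLp_toLp, dif_neg h]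
        exact continuous_const
    exact (PiLp.continuous_toLp (p := 2) (β := fun _ : Fin d => ℝ)).comp hc
  -- existence
  have hex : ∀ y, ∃ z, projQ d 1 hd z = y ∧ Φ z = x₀ := by
    intro y
    have hψ : Continuous fun x => Φ (e x y) := hΦcont.comp (hecont2 y)
    have hb1 : Φ (e (x₀ - C' - 1) y) ≤ x₀ - 1 := by
      have h := hΦP (e (x₀ - C' - 1) y)
      rw [he0] at h
      have := abs_le.1 h
      linarith [this.2]
    have hb2 : x₀ + 1 ≤ Φ (e (x₀ + C' + 1) y) := by
      have h := hΦP (e (x₀ + C' + 1) y)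
      rw [he0] at h
      have := abs_le.1 h
      linarith [this.1]
    have hsub := intermediate_value_Icc
      (by linarith : x₀ - C' - 1 ≤ x₀ + C' + 1)
      (hψ.comp continuous_id).continuousOn
    have hmem : x₀ ∈ Set.Icc (Φ (e (x₀ - C' - 1) y)) (Φ (e (x₀ + C' + 1) y)) :=
      ⟨by linarith, by linarith⟩
    obtain ⟨x, _, hx⟩ := hsub hmem
    exact ⟨e x y, heQ x y, hx⟩
  -- uniqueness
  have huniq : ∀ z z' : EuclideanSpace ℝ (Fin d), projQ d 1 hd z = projQ d 1 hd z' →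
      Φ z = x₀ → Φ z' = x₀ → z = z' := by
    intro z z' hq h1 h2
    have hPeq : z i0 = z' i0 := by
      by_contra hne
      have hδ : 0 < |z i0 - z' i0| := abs_pos.2 (sub_ne_zero.2 hne)
      obtain ⟨n, hn⟩ := ((tendsto_pow_atTop_atTop_of_one_lt hK).eventually_ge_atTop
        ((2 * C' + 1) / |z i0 - z' i0|)).exists
      have hKn : 2 * C' + 1 ≤ K ^ n * |z i0 - z' i0| := by
        rw [div_le_iff₀ hδ] at hn
        linarith
      have hI := hinj n z z' hq
      rw [h1, h2, sub_self, abs_zero] at hI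
      have hpos : 0 < r ^ n * (K ^ n * |z i0 - z' i0| - 2 * C') :=
        mul_pos (pow_pos hr0 n) (by linarith)
      linarith
    calc z = e (z i0) (projQ d 1 hd z) := (herec z).symm
      _ = e (z' i0) (projQ d 1 hd z') := by rw [hPeq, hq]
      _ = z' := herec z'
  choose zfun hz1 hz2 using hex
  refine ⟨fun y => ?_, fun y => (zfun y) i0, ?_, ?_⟩
  · exact ⟨zfun y, ⟨hz1 y, hz2 y⟩, fun z' hz' =>
      huniq z' (zfun y) (hz'.1.trans (hz1 y).symm) hz'.2 (hz2 y)⟩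
  · -- continuity of h
    rw [continuous_iff_continuousAt]
    intro y
    rw [Metric.continuousAt_iff]
    intro ε hε
    obtain ⟨n, hn⟩ := ((tendsto_pow_atTop_atTop_of_one_lt hK).eventually_ge_atTop
      ((2 * C' + 1) / ε)).exists
    have hKn : 2 * C' + 1 ≤ K ^ n * ε := by
      rw [div_le_iff₀ hε] at hn
      linarith
    have hc : 0 < r ^ n * (K ^ n * ε - 2 * C') :=
      mul_pos (pow_pos hr0 n) (by linarith)
    have hcont2 : ContinuousAt (fun y' => Φ (e ((zfun y) i0) y')) y :=
      (hΦcont.comp (hecont1 ((zfun y) i0))).continuousAt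
    rw [Metric.continuousAt_iff] at hcont2
    obtain ⟨δ, hδ, hδ2⟩ := hcont2 _ hc
    refine ⟨δ, hδ, fun {y'} hy' => ?_⟩
    have h5 := hδ2 hy'
    have hey : e ((zfun y) i0) y = zfun y := by
      have h6 := herec (zfun y)
      rwa [hz1 y] at h6
    rw [Real.dist_eq] at h5 ⊢
    rw [hey, hz2 y] at h5
    by_contra hcon
    push_neg at hcon
    have hq : projQ d 1 hd (e ((zfun y) i0) y') = projQ d 1 hd (e ((zfun y') i0) y') := by
      rw [heQ, heQ]
    have hI := hinj n (e ((zfun y) i0) y') (e ((zfun y') i0) y') hq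
    rw [he0, he0] at hI
    have hey' : e ((zfun y') i0) y' = zfun y' := by
      have h6 := herec (zfun y')
      rwa [hz1 y'] at h6
    rw [hey', hz2 y'] at hI
    have hmono : r ^ n * (K ^ n * ε - 2 * C')
        ≤ r ^ n * (K ^ n * |(zfun y) i0 - (zfun y') i0| - 2 * C') := by
      have habs : ε ≤ |(zfun y) i0 - (zfun y') i0| := by
        rw [abs_sub_comm]
        exact hcon
      have hKn0 : (0:ℝ) < K ^ n := pow_pos (by linarith) n
      have : K ^ n * ε ≤ K ^ n * |(zfun y) i0 - (zfun y') i0| :=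
        mul_le_mul_of_nonneg_left habs (le_of_lt hKn0)
      apply mul_le_mul_of_nonneg_left _ (le_of_lt (pow_pos hr0 n))
      linarith
    linarith
  · -- characterization
    intro z
    constructor
    · intro h
      have hzz : z = zfun (projQ d 1 hd z) :=
        huniq z (zfun (projQ d 1 hd z)) (hz1 _).symm h (hz2 _)
      conv_lhs => rw [hzz]
    · intro h
      have hzz : z = zfun (projQ d 1 hd z) := by
        have step1 : e (z i0) (projQ d 1 hd z)
            = e ((zfun (projQ d 1 hd z)) i0) (projQ d 1 hd (zfun (projQ d 1 hd z))) := by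
          rw [hz1 (projQ d 1 hd z), h]
        calc z = e (z i0) (projQ d 1 hd z) := (herec z).symm
          _ = e ((zfun (projQ d 1 hd z)) i0) (projQ d 1 hd (zfun (projQ d 1 hd z))) := step1
          _ = zfun (projQ d 1 hd z) := herec _
      rw [hzz]
      exact hz2 _
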